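/- The functions I₂ = 2 ln u - w - ln(4u²u₁² + 4xuu₁ + 4u⁴ + x²) and I₃ = arctan((u²u₁ + xu/2)/u³) + x are first integrals of the vector field Y₀ = ∂_x + u₁∂_u + (-x²/(4u³) - u - 1/(2u))∂_{u₁} + (x/u²)∂_w on the region of ℝ⁴ (coordinates x, u, u₁, w) where u > 0; that is, Y₀(I₂) = 0 and Y₀(I₃) = 0. -/

import Mathlib

namespace Ex2

/-- The vector field `Y₀ = ∂_x + u₁∂_u + (-x²/(4u³) - u - 1/(2u))∂_{u₁} + (x/u²)∂_w`
on coordinates `p = (x, u, u₁, w)`. -/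
noncomputable def Y₀ (p : Fin 4 → ℝ) : Fin 4 → ℝ :=
  ![1, p 2, -(p 0) ^ 2 / (4 * (p 1) ^ 3) - p 1 - 1 / (2 * p 1), p 0 / (p 1) ^ 2]

/-- `I₂ = 2 ln u - w - ln(4u²u₁² + 4xuu₁ + 4u⁴ + x²)`. -/
noncomputable def I₂ (p : Fin 4 → ℝ) : ℝ :=
  2 * Real.log (p 1) - p 3 -
    Real.log (4 * (p 1) ^ 2 * (p 2) ^ 2 + 4 * p 0 * p 1 * p 2 + 4 * (p 1) ^ 4 + (p 0) ^ 2)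

/-- `I₃ = arctan((u²u₁ + xu/2)/u³) + x`. -/
noncomputable def I₃ (p : Fin 4 → ℝ) : ℝ :=
  Real.arctan (((p 1) ^ 2 * p 2 + p 0 * p 1 / 2) / (p 1) ^ 3) + p 0

end Ex2

open Ex2 in
/-- `I₂` and `I₃` are first integrals of
`Y₀ = ∂_x + u₁∂_u + (-x²/(4u³) - u - 1/(2u))∂_{u₁} + (x/u²)∂_w` on the region `u > 0`:
`Y₀(I₂) = 0` and `Y₀(I₃) = 0`. -/
theorem stmt_9 (p : Fin 4 → ℝ) (hu : p 1 > 0) :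
    fderiv ℝ I₂ p (Y₀ p) = 0 ∧ fderiv ℝ I₃ p (Y₀ p) = 0 := by
  have hune : p 1 ≠ 0 := ne_of_gt hu
  have h0 := hasFDerivAt_apply (𝕜 := ℝ) 0 p
  have h1 := hasFDerivAt_apply (𝕜 := ℝ) 1 p
  have h2 := hasFDerivAt_apply (𝕜 := ℝ) 2 p
  have h3 := hasFDerivAt_apply (𝕜 := ℝ) 3 p
  have h1sq := (hasDerivAt_pow 2 (p 1)).comp_hasFDerivAt p h1
  have h2sq := (hasDerivAt_pow 2 (p 2)).comp_hasFDerivAt p h2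
  have h0sq := (hasDerivAt_pow 2 (p 0)).comp_hasFDerivAt p h0
  have h1q := (hasDerivAt_pow 4 (p 1)).comp_hasFDerivAt p h1
  have h1cb := (hasDerivAt_pow 3 (p 1)).comp_hasFDerivAt p h1
  have hQ : HasFDerivAt (fun q : Fin 4 → ℝ =>
      4 * (q 1) ^ 2 * (q 2) ^ 2 + 4 * q 0 * q 1 * q 2 + 4 * (q 1) ^ 4 + (q 0) ^ 2) _ p :=
    (((((h1sq.const_mul 4).mul h2sq).add
      (((h0.const_mul 4).mul h1).mul h2)).add (h1q.const_mul 4)).add h0sq)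
  have hQpos : 4 * (p 1) ^ 2 * (p 2) ^ 2 + 4 * p 0 * p 1 * p 2 + 4 * (p 1) ^ 4 + (p 0) ^ 2 > 0 := by
    have : 4 * (p 1) ^ 2 * (p 2) ^ 2 + 4 * p 0 * p 1 * p 2 + 4 * (p 1) ^ 4 + (p 0) ^ 2
        = (2 * p 1 * p 2 + p 0) ^ 2 + 4 * (p 1) ^ 4 := by ring
    rw [this]
    positivity
  have hI2 : HasFDerivAt I₂ _ p :=
    (((h1.log hune).const_mul 2).sub h3).sub (hQ.log (ne_of_gt hQpos))
  have hcbne : (p 1) ^ 3 ≠ 0 := pow_ne_zero 3 hune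
  have hinv := (hasDerivAt_inv hcbne).comp_hasFDerivAt p h1cb
  have hI3eq : I₃ = fun q : Fin 4 → ℝ =>
      Real.arctan (((q 1) ^ 2 * q 2 + q 0 * q 1 * 2⁻¹) * (((q 1) ^ 3)⁻¹)) + q 0 := by
    funext q
    rw [I₃, div_eq_mul_inv, div_eq_mul_inv]
  have hI3 : HasFDerivAt (fun q : Fin 4 → ℝ =>
      Real.arctan (((q 1) ^ 2 * q 2 + q 0 * q 1 * 2⁻¹) * (((q 1) ^ 3)⁻¹)) + q 0) _ p :=
    (((h1sq.mul h2).add ((h0.mul h1).mul_const 2⁻¹)).mul hinv).arctan.add h0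
  constructor
  · rw [hI2.fderiv]
    simp only [ContinuousLinearMap.coe_sub', ContinuousLinearMap.coe_add',
      ContinuousLinearMap.coe_smul', Pi.sub_apply, Pi.add_apply, Pi.smul_apply,
      ContinuousLinearMap.proj_apply, smul_eq_mul, Y₀, Matrix.cons_val_zero,
      Matrix.cons_val_one, Matrix.head_cons, Matrix.cons_val_two, Matrix.tail_cons,
      Matrix.cons_val_three, Matrix.head_fin_const, Function.comp_apply, Pi.mul_apply]
    have hQne := ne_of_gt hQpos
    field_simp
    have hQne' : p 1 * p 2 * p 0 * 4 + p 1 ^ 2 * p 2 ^ 2 * 4 + p 1 ^ 4 * 4 + p 0 ^ 2 ≠ 0 := by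
      convert hQne using 1; ring
    have key := mul_inv_cancel₀ hQne'
    linear_combination (-(p 1 * p 2 * 4 - p 0 * 2)) * key
  · rw [hI3eq, hI3.fderiv]
    simp only [ContinuousLinearMap.coe_sub', ContinuousLinearMap.coe_add',
      ContinuousLinearMap.coe_smul', Pi.sub_apply, Pi.add_apply, Pi.smul_apply,
      ContinuousLinearMap.proj_apply, smul_eq_mul, Y₀, Matrix.cons_val_zero,
      Matrix.cons_val_one, Matrix.head_cons, Matrix.cons_val_two, Matrix.tail_cons,
      Matrix.cons_val_three, Matrix.head_fin_const, Function.comp_apply, Pi.mul_apply]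
    have hden : (p 1) ^ 3 ≠ 0 := by positivity
    have h1p : 1 + (((p 1) ^ 2 * p 2 + p 0 * p 1 / 2) / (p 1) ^ 3) ^ 2 ≠ 0 := by positivity
    field_simp
    ring
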